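/- Let U = {1, u, v} and U' = {1, u', v'} where u, v, u', v' are unit-magnitude complex numbers with u ≠ ±1, v ≠ ±1, u ≠ ±v, u' ≠ ±1, v' ≠ ±1, u' ≠ ±v'. Write x = I_{u,v}(0,1) = a + bi and y = I_{u',v'}(0,1) = c + di with a, b, c, d ∈ ℝ. Then R(U) = R(U') if and only if either (b = d and a − c ∈ ℤ) or (b = −d and a + c ∈ ℤ). -/

import Mathlib

open Complex

/-- The bracket `[x,y] = x * conj y - y * conj x`. -/
noncomputable def brkt (x y : ℂ) : ℂ := x * (starRingEnd ℂ) y - y * (starRingEnd ℂ) x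

/-- `lineInt α β p q` is the intersection point `I_{α,β}(p,q)` of the line through `p`
with direction `α` and the line through `q` with direction `β` (for unit `α ≠ ±β`),
given by the formula of Buhler et al. -/
noncomputable def lineInt (α β p q : ℂ) : ℂ :=
  brkt α p / brkt α β * β + brkt β q / brkt β α * α

/-- The sets `S n` in the inductive construction. -/
def stepSet (U : Set ℂ) : ℕ → Set ℂ
  | 0 => {0, 1}
  | n + 1 => {z | ∃ α ∈ U, ∃ β ∈ U, α ≠ β ∧ α ≠ -β ∧
      ∃ p ∈ stepSet U n, ∃ q ∈ stepSet U n, z = lineInt α β p q}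

/-- `RU U = ⋃ n, S n`. -/
def RU (U : Set ℂ) : Set ℂ := ⋃ n, stepSet U n

/-- Elementary monomials of `U`. -/
def IsElem (U : Set ℂ) (z : ℂ) : Prop :=
  ∃ α ∈ U, ∃ β ∈ U, α ≠ β ∧ α ≠ -β ∧ z = lineInt α β 0 1

/-- Monomials of `U`, defined inductively. -/
inductive IsMonomial (U : Set ℂ) : ℂ → Prop
  | elementary (α β : ℂ) (hα : α ∈ U) (hβ : β ∈ U) (h1 : α ≠ β) (h2 : α ≠ -β) :
      IsMonomial U (lineInt α β 0 1)
  | step (α β m : ℂ) (hα : α ∈ U) (hβ : β ∈ U) (h1 : α ≠ β) (h2 : α ≠ -β)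
      (hm : IsMonomial U m) : IsMonomial U (lineInt α β 0 m)

/-- `P`: the real numbers arising as length-two monomials `I_{γ,δ}(0,z)` on the real axis. -/
def projSet (U : Set ℂ) : Set ℝ :=
  {r | ∃ γ ∈ U, ∃ δ ∈ U, γ ≠ δ ∧ γ ≠ -δ ∧ ∃ z, IsElem U z ∧ (r : ℂ) = lineInt γ δ 0 z}

/-- `m` is a `ℤ[P]`-linear combination of elementary monomials of `U`. -/
def IsZPComb (U : Set ℂ) (m : ℂ) : Prop :=
  ∃ (n : ℕ) (c : Fin n → ℝ) (z : Fin n → ℂ),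
    (∀ i, c i ∈ Subring.closure (projSet U)) ∧ (∀ i, IsElem U (z i)) ∧
    m = ∑ i, (c i : ℂ) * z i

set_option linter.unusedSectionVars false

lemma conj_of_unit {u : ℂ} (hu : ‖u‖ = 1) : (starRingEnd ℂ) u = u⁻¹ := by
  have h0 : u ≠ 0 := by intro h; simp [h] at hu
  field_simp
  rw [mul_comm, Complex.mul_conj]
  norm_cast
  rw [← Complex.sq_norm, hu]; norm_num

lemma sq_ne_sq' {u v : ℂ} (h1 : u ≠ v) (h2 : u ≠ -v) : u^2 ≠ v^2 := by
  intro h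
  rcases sq_eq_sq_iff_eq_or_eq_neg.mp h with h' | h' <;> [exact h1 h'; exact h2 h']

lemma brkt_anti (x y : ℂ) : brkt y x = - brkt x y := by simp only [brkt]; ring

lemma cramer (α β p : ℂ) : brkt α p * β - brkt β p * α = brkt α β * p := by
  simp only [brkt]; ring

lemma brkt_conj (x y : ℂ) : (starRingEnd ℂ) (brkt x y) = - brkt x y := by
  simp only [brkt, map_sub, map_mul, Complex.conj_conj]; ring

lemma brkt_unit_ne {α β : ℂ} (hα : ‖α‖ = 1) (hβ : ‖β‖ = 1)
    (h1 : α ≠ β) (h2 : α ≠ -β) : brkt α β ≠ 0 := by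
  have hα0 : α ≠ 0 := by intro h; simp [h] at hα
  have hβ0 : β ≠ 0 := by intro h; simp [h] at hβ
  have h3 : α^2 ≠ β^2 := sq_ne_sq' h1 h2
  simp only [brkt, conj_of_unit hα, conj_of_unit hβ]
  intro h
  apply h3
  field_simp at h
  linear_combination h

lemma brkt_zero (x : ℂ) : brkt x 0 = 0 := by simp [brkt]

lemma brkt_self (x : ℂ) : brkt x x = 0 := by simp only [brkt]; ring

lemma brkt_smul (β c z : ℂ) (hc : (starRingEnd ℂ) c = c) :
    brkt β (c * z) = c * brkt β z := by
  simp only [brkt, map_mul, hc]; ring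

lemma brkt_int_lin (β z : ℂ) (k l : ℤ) :
    brkt β ((k:ℂ) + (l:ℂ) * z) = (k:ℂ) * brkt β 1 + (l:ℂ) * brkt β z := by
  simp only [brkt, map_add, map_mul, map_one, map_intCast]; ring

lemma lineInt_shift {α β : ℂ} (hb : brkt β α ≠ 0) (p q : ℂ) :
    lineInt α β p q = p + brkt β (q - p) / brkt β α * α := by
  have hba : brkt β α = - brkt α β := brkt_anti α β
  have hab : brkt α β ≠ 0 := by intro h; apply hb; rw [hba, h, neg_zero]
  have hsub : brkt β (q - p) = brkt β q - brkt β p := by simp only [brkt, map_sub]; ring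
  have key2 : brkt α p * β = brkt α β * p + brkt β p * α := by linear_combination cramer α β p
  simp only [lineInt]
  rw [hsub, hba, div_neg, div_neg]
  rw [div_mul_eq_mul_div, key2, add_div, mul_div_cancel_left₀ _ hab]
  ring

lemma lineInt_self {α β : ℂ} (hb : brkt β α ≠ 0) (p : ℂ) : lineInt α β p p = p := by
  rw [lineInt_shift hb, sub_self, brkt_zero, zero_div, zero_mul, add_zero]

section ops

variable {u v : ℂ} (hu : ‖u‖ = 1) (hv : ‖v‖ = 1)
  (hu1 : u ≠ 1) (hu1' : u ≠ -1) (hv1 : v ≠ 1) (hv1' : v ≠ -1)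
  (huv : u ≠ v) (huv' : u ≠ -v)

include hu hv hu1 hu1' hv1 hv1'

lemma b1u : brkt u 1 ≠ 0 := brkt_unit_ne hu (by simp) hu1 hu1'

lemma bu1 : brkt 1 u ≠ 0 := by
  have h2 : (1:ℂ) ≠ -u := fun h => hu1' (by linear_combination h)
  exact brkt_unit_ne (by simp) hu (Ne.symm hu1) h2

lemma b1v : brkt v 1 ≠ 0 := brkt_unit_ne hv (by simp) hv1 hv1'

lemma bv1 : brkt 1 v ≠ 0 := by
  have h2 : (1:ℂ) ≠ -v := fun h => hv1' (by linear_combination h)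
  exact brkt_unit_ne (by simp) hv (Ne.symm hv1) h2

include huv huv'

lemma buv : brkt u v ≠ 0 := brkt_unit_ne hu hv huv huv'

lemma bvu : brkt v u ≠ 0 := by
  rw [brkt_anti]; exact neg_ne_zero.mpr (buv hu hv hu1 hu1' hv1 hv1' huv huv')

lemma X_eq : lineInt u v 0 1 = brkt v 1 / brkt v u * u := by
  simp [lineInt, brkt_zero]

lemma c_real : (starRingEnd ℂ) (brkt v 1 / brkt v u) = brkt v 1 / brkt v u := by
  rw [map_div₀, brkt_conj, brkt_conj, neg_div_neg_eq]

lemma brkt_uX : brkt u (lineInt u v 0 1) = 0 := by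
  rw [X_eq hu hv hu1 hu1' hv1 hv1' huv huv',
    brkt_smul _ _ _ (c_real hu hv hu1 hu1' hv1 hv1' huv huv'), brkt_self, mul_zero]

lemma brkt_vX : brkt v (lineInt u v 0 1) = brkt v 1 := by
  rw [X_eq hu hv hu1 hu1' hv1 hv1' huv huv',
    brkt_smul _ _ _ (c_real hu hv hu1 hu1' hv1 hv1' huv huv'),
    div_mul_cancel₀ _ (bvu hu hv hu1 hu1' hv1 hv1' huv huv')]

lemma X_ne_real (r : ℝ) : lineInt u v 0 1 ≠ (r : ℂ) := by
  intro h
  have hc := c_real hu hv hu1 hu1' hv1 hv1' huv huv'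
  have hX := X_eq hu hv hu1 hu1' hv1 hv1' huv huv'
  have h2 : (starRingEnd ℂ) (lineInt u v 0 1) = lineInt u v 0 1 := by
    rw [h]; exact Complex.conj_ofReal r
  rw [hX, map_mul, hc] at h2
  have h3 : brkt v 1 / brkt v u * ((starRingEnd ℂ) u - u) = 0 := by
    linear_combination h2
  rcases mul_eq_zero.mp h3 with h4 | h4
  · exact b1v hu hv hu1 hu1' hv1 hv1'
      (by rcases div_eq_zero_iff.mp h4 with h5 | h5
          · exact h5
          · exact absurd h5 (bvu hu hv hu1 hu1' hv1 hv1' huv huv'))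
  · apply bu1 hu hv hu1 hu1' hv1 hv1'
    simp only [brkt, map_one, one_mul, mul_one]
    linear_combination h4

end ops

section ops2

variable {u v : ℂ} (hu : ‖u‖ = 1) (hv : ‖v‖ = 1)
  (hu1 : u ≠ 1) (hu1' : u ≠ -1) (hv1 : v ≠ 1) (hv1' : v ≠ -1)
  (huv : u ≠ v) (huv' : u ≠ -v)

include hu hv hu1 hu1' hv1 hv1' huv huv'

lemma coeff_vu : brkt u 1 / brkt u v * v = 1 - lineInt u v 0 1 := by
  have e_w : brkt u 1 * v = brkt u v * 1 + brkt v 1 * u := by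
    linear_combination cramer u v 1
  rw [div_mul_eq_mul_div, e_w, mul_one, add_div, div_self (buv hu hv hu1 hu1' hv1 hv1' huv huv'),
    brkt_anti v u, div_neg, X_eq hu hv hu1 hu1' hv1 hv1' huv huv', div_mul_eq_mul_div]
  ring

lemma coeff_1u : brkt 1 (lineInt u v 0 1) / brkt 1 u * u = lineInt u v 0 1 := by
  have huX := brkt_uX hu hv hu1 hu1' hv1 hv1' huv huv'
  have e_u : brkt 1 (lineInt u v 0 1) * u = brkt 1 u * lineInt u v 0 1 := by
    simp only [brkt, map_one, one_mul, mul_one] at huX ⊢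
    linear_combination huX
  rw [div_mul_eq_mul_div, e_u, mul_div_cancel_left₀ _ (bu1 hu hv hu1 hu1' hv1 hv1')]

lemma coeff_1v : brkt 1 (lineInt u v 0 1) / brkt 1 v * v = lineInt u v 0 1 - 1 := by
  have hvX := brkt_vX hu hv hu1 hu1' hv1 hv1' huv huv'
  have e_v : brkt 1 (lineInt u v 0 1) * v = brkt 1 v * (lineInt u v 0 1 - 1) := by
    simp only [brkt, map_one, one_mul, mul_one] at hvX ⊢
    linear_combination hvX
  rw [div_mul_eq_mul_div, e_v, mul_div_cancel_left₀ _ (bv1 hu hv hu1 hu1' hv1 hv1')]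

lemma op1u (m n m' n' : ℤ) :
    lineInt 1 u ((m:ℂ) + (n:ℂ) * lineInt u v 0 1) ((m':ℂ) + (n':ℂ) * lineInt u v 0 1)
      = (m':ℂ) + (n:ℂ) * lineInt u v 0 1 := by
  rw [lineInt_shift (b1u hu hv hu1 hu1' hv1 hv1')]
  have hqp : ((m':ℂ) + (n':ℂ) * lineInt u v 0 1) - ((m:ℂ) + (n:ℂ) * lineInt u v 0 1)
      = ((m'-m : ℤ):ℂ) + ((n'-n : ℤ):ℂ) * lineInt u v 0 1 := by push_cast; ring
  rw [hqp, brkt_int_lin, brkt_uX hu hv hu1 hu1' hv1 hv1' huv huv', mul_zero, add_zero,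
    mul_div_assoc, div_self (b1u hu hv hu1 hu1' hv1 hv1'), mul_one, mul_one]
  push_cast; ring

lemma op1v (m n m' n' : ℤ) :
    lineInt 1 v ((m:ℂ) + (n:ℂ) * lineInt u v 0 1) ((m':ℂ) + (n':ℂ) * lineInt u v 0 1)
      = ((m'+n'-n : ℤ):ℂ) + (n:ℂ) * lineInt u v 0 1 := by
  rw [lineInt_shift (b1v hu hv hu1 hu1' hv1 hv1')]
  have hqp : ((m':ℂ) + (n':ℂ) * lineInt u v 0 1) - ((m:ℂ) + (n:ℂ) * lineInt u v 0 1)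
      = ((m'-m : ℤ):ℂ) + ((n'-n : ℤ):ℂ) * lineInt u v 0 1 := by push_cast; ring
  rw [hqp, brkt_int_lin, brkt_vX hu hv hu1 hu1' hv1 hv1' huv huv']
  have h : (((m'-m : ℤ):ℂ) * brkt v 1 + ((n'-n : ℤ):ℂ) * brkt v 1) / brkt v 1
      = ((m'-m : ℤ):ℂ) + ((n'-n : ℤ):ℂ) := by
    rw [div_eq_iff (b1v hu hv hu1 hu1' hv1 hv1')]; ring
  rw [h, mul_one]
  push_cast; ring

lemma opu1 (m n m' n' : ℤ) :
    lineInt u 1 ((m:ℂ) + (n:ℂ) * lineInt u v 0 1) ((m':ℂ) + (n':ℂ) * lineInt u v 0 1)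
      = (m:ℂ) + (n':ℂ) * lineInt u v 0 1 := by
  rw [lineInt_shift (bu1 hu hv hu1 hu1' hv1 hv1')]
  have hqp : ((m':ℂ) + (n':ℂ) * lineInt u v 0 1) - ((m:ℂ) + (n:ℂ) * lineInt u v 0 1)
      = ((m'-m : ℤ):ℂ) + ((n'-n : ℤ):ℂ) * lineInt u v 0 1 := by push_cast; ring
  rw [hqp, brkt_int_lin, brkt_self, mul_zero, zero_add]
  have h : ((n'-n : ℤ):ℂ) * brkt 1 (lineInt u v 0 1) / brkt 1 u * u
      = ((n'-n : ℤ):ℂ) * (brkt 1 (lineInt u v 0 1) / brkt 1 u * u) := by ring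
  rw [h, coeff_1u hu hv hu1 hu1' hv1 hv1' huv huv']
  push_cast; ring

lemma opv1 (m n m' n' : ℤ) :
    lineInt v 1 ((m:ℂ) + (n:ℂ) * lineInt u v 0 1) ((m':ℂ) + (n':ℂ) * lineInt u v 0 1)
      = ((m+n-n' : ℤ):ℂ) + (n':ℂ) * lineInt u v 0 1 := by
  rw [lineInt_shift (bv1 hu hv hu1 hu1' hv1 hv1')]
  have hqp : ((m':ℂ) + (n':ℂ) * lineInt u v 0 1) - ((m:ℂ) + (n:ℂ) * lineInt u v 0 1)
      = ((m'-m : ℤ):ℂ) + ((n'-n : ℤ):ℂ) * lineInt u v 0 1 := by push_cast; ring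
  rw [hqp, brkt_int_lin, brkt_self, mul_zero, zero_add]
  have h : ((n'-n : ℤ):ℂ) * brkt 1 (lineInt u v 0 1) / brkt 1 v * v
      = ((n'-n : ℤ):ℂ) * (brkt 1 (lineInt u v 0 1) / brkt 1 v * v) := by ring
  rw [h, coeff_1v hu hv hu1 hu1' hv1 hv1' huv huv']
  push_cast; ring

lemma opuv (m n m' n' : ℤ) :
    lineInt u v ((m:ℂ) + (n:ℂ) * lineInt u v 0 1) ((m':ℂ) + (n':ℂ) * lineInt u v 0 1)
      = (m:ℂ) + ((m'+n'-m : ℤ):ℂ) * lineInt u v 0 1 := by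
  rw [lineInt_shift (bvu hu hv hu1 hu1' hv1 hv1' huv huv')]
  have hqp : ((m':ℂ) + (n':ℂ) * lineInt u v 0 1) - ((m:ℂ) + (n:ℂ) * lineInt u v 0 1)
      = ((m'-m : ℤ):ℂ) + ((n'-n : ℤ):ℂ) * lineInt u v 0 1 := by push_cast; ring
  rw [hqp, brkt_int_lin, brkt_vX hu hv hu1 hu1' hv1 hv1' huv huv']
  have h : (((m'-m : ℤ):ℂ) * brkt v 1 + ((n'-n : ℤ):ℂ) * brkt v 1) / brkt v u * u
      = (((m'-m : ℤ):ℂ) + ((n'-n : ℤ):ℂ)) * (brkt v 1 / brkt v u * u) := by ring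
  rw [h, ← X_eq hu hv hu1 hu1' hv1 hv1' huv huv']
  push_cast; ring

lemma opvu (m n m' n' : ℤ) :
    lineInt v u ((m:ℂ) + (n:ℂ) * lineInt u v 0 1) ((m':ℂ) + (n':ℂ) * lineInt u v 0 1)
      = (m':ℂ) + ((m+n-m' : ℤ):ℂ) * lineInt u v 0 1 := by
  rw [lineInt_shift (buv hu hv hu1 hu1' hv1 hv1' huv huv')]
  have hqp : ((m':ℂ) + (n':ℂ) * lineInt u v 0 1) - ((m:ℂ) + (n:ℂ) * lineInt u v 0 1)
      = ((m'-m : ℤ):ℂ) + ((n'-n : ℤ):ℂ) * lineInt u v 0 1 := by push_cast; ring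
  rw [hqp, brkt_int_lin, brkt_uX hu hv hu1 hu1' hv1 hv1' huv huv', mul_zero, add_zero]
  have h : ((m'-m : ℤ):ℂ) * brkt u 1 / brkt u v * v
      = ((m'-m : ℤ):ℂ) * (brkt u 1 / brkt u v * v) := by ring
  rw [h, coeff_vu hu hv hu1 hu1' hv1 hv1' huv huv']
  push_cast; ring

end ops2

section char

variable {u v : ℂ} (hu : ‖u‖ = 1) (hv : ‖v‖ = 1)
  (hu1 : u ≠ 1) (hu1' : u ≠ -1) (hv1 : v ≠ 1) (hv1' : v ≠ -1)
  (huv : u ≠ v) (huv' : u ≠ -v)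

include hu hv hu1 hu1' hv1 hv1' huv huv'

lemma stepSet_mono : ∀ {i j : ℕ}, i ≤ j → stepSet {1,u,v} i ⊆ stepSet {1,u,v} j := by
  intro i j h
  induction h with
  | refl => exact subset_rfl
  | step h ih =>
    intro z hz
    refine ⟨1, Set.mem_insert _ _, u, Set.mem_insert_of_mem _ (Set.mem_insert _ _),
      Ne.symm hu1, fun h => hu1' (by linear_combination h), z, ih hz, z, ih hz, ?_⟩
    exact (lineInt_self (b1u hu hv hu1 hu1' hv1 hv1') z).symm

lemma RU_closed (α β : ℂ) (hα : α ∈ ({1,u,v} : Set ℂ)) (hβ : β ∈ ({1,u,v} : Set ℂ))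
    (h1 : α ≠ β) (h2 : α ≠ -β) {p q : ℂ}
    (hp : p ∈ RU {1,u,v}) (hq : q ∈ RU {1,u,v}) :
    lineInt α β p q ∈ RU {1,u,v} := by
  obtain ⟨i, hi⟩ := Set.mem_iUnion.mp hp
  obtain ⟨j, hj⟩ := Set.mem_iUnion.mp hq
  refine Set.mem_iUnion.mpr ⟨max i j + 1,
    ⟨α, hα, β, hβ, h1, h2, p, ?_, q, ?_, rfl⟩⟩
  · exact stepSet_mono hu hv hu1 hu1' hv1 hv1' huv huv' (le_max_left i j) hi
  · exact stepSet_mono hu hv hu1 hu1' hv1 hv1' huv huv' (le_max_right i j) hj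

lemma RU_char : RU {1,u,v} = {z : ℂ | ∃ m n : ℤ, z = (m:ℂ) + (n:ℂ) * lineInt u v 0 1} := by
  have m1 : (1:ℂ) ∈ ({1,u,v} : Set ℂ) := Set.mem_insert _ _
  have mu : u ∈ ({1,u,v} : Set ℂ) := Set.mem_insert_of_mem _ (Set.mem_insert _ _)
  have mv : v ∈ ({1,u,v} : Set ℂ) :=
    Set.mem_insert_of_mem _ (Set.mem_insert_of_mem _ rfl)
  have n1u : (1:ℂ) ≠ u := Ne.symm hu1
  have n1u' : (1:ℂ) ≠ -u := fun h => hu1' (by linear_combination h)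
  have n1v : (1:ℂ) ≠ v := Ne.symm hv1
  have n1v' : (1:ℂ) ≠ -v := fun h => hv1' (by linear_combination h)
  have nu1' : u ≠ -1 := hu1'
  have nv1' : v ≠ -1 := hv1'
  have nvu : v ≠ u := Ne.symm huv
  have nvu' : v ≠ -u := fun h => huv' (by linear_combination h)
  apply Set.eq_of_subset_of_subset
  · -- forward inclusion
    refine Set.iUnion_subset ?_
    intro k
    induction k with
    | zero =>
      intro z hz
      rcases hz with rfl | hz
      · exact ⟨0, 0, by push_cast; ring⟩
      · rcases hz with rfl
        exact ⟨1, 0, by push_cast; ring⟩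
    | succ k ih =>
      intro z hz
      obtain ⟨α, hα, β, hβ, hne, hne', p, hp, q, hq, rfl⟩ := hz
      obtain ⟨m, n, rfl⟩ := ih hp
      obtain ⟨m', n', rfl⟩ := ih hq
      simp only [Set.mem_insert_iff, Set.mem_singleton_iff] at hα hβ
      rcases hα with rfl | rfl | rfl <;> rcases hβ with rfl | rfl | rfl
      · exact absurd rfl hne
      · exact ⟨m', n, op1u hu hv hu1 hu1' hv1 hv1' huv huv' m n m' n'⟩
      · exact ⟨m'+n'-n, n, op1v hu hv hu1 hu1' hv1 hv1' huv huv' m n m' n'⟩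
      · exact ⟨m, n', opu1 hu hv hu1 hu1' hv1 hv1' huv huv' m n m' n'⟩
      · exact absurd rfl hne
      · exact ⟨m, m'+n'-m, opuv hu hv hu1 hu1' hv1 hv1' huv huv' m n m' n'⟩
      · exact ⟨m+n-n', n', opv1 hu hv hu1 hu1' hv1 hv1' huv huv' m n m' n'⟩
      · exact ⟨m', m+n-m', opvu hu hv hu1 hu1' hv1 hv1' huv huv' m n m' n'⟩
      · exact absurd rfl hne
  · -- reverse inclusion
    have h0 : (0:ℂ) ∈ RU {1,u,v} := Set.mem_iUnion.mpr ⟨0, Or.inl rfl⟩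
    have h1 : (1:ℂ) ∈ RU {1,u,v} := Set.mem_iUnion.mpr ⟨0, Or.inr rfl⟩
    have cl := RU_closed hu hv hu1 hu1' hv1 hv1' huv huv'
    have hX : lineInt u v 0 1 ∈ RU {1,u,v} := cl u v mu mv huv huv' h0 h1
    -- all integers are in RU
    have hZ : ∀ k : ℤ, (k:ℂ) ∈ RU {1,u,v} := by
      intro k
      induction k using Int.induction_on with
      | zero => exact_mod_cast h0
      | succ i ihp =>
        -- from (i:ℂ) get (i:ℂ) + X, then (i+1:ℂ)
        have e1 : ((i:ℤ):ℂ) + lineInt u v 0 1 ∈ RU {1,u,v} := by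
          have hmem := cl u 1 mu m1 hu1 nu1' ihp hX
          have heq := opu1 hu hv hu1 hu1' hv1 hv1' huv huv' i 0 0 1
          push_cast at heq
          have h2 : lineInt u 1 ((i:ℤ):ℂ) (lineInt u v 0 1)
              = ((i:ℤ):ℂ) + lineInt u v 0 1 := by simpa using heq
          rw [h2] at hmem
          exact hmem
        have hmem2 := cl v 1 mv m1 hv1 nv1' e1 h0
        have heq2 := opv1 hu hv hu1 hu1' hv1 hv1' huv huv' i 1 0 0
        push_cast at heq2
        have : lineInt v 1 (((i:ℤ):ℂ) + lineInt u v 0 1) 0 = ((i:ℤ):ℂ) + 1 := by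
          simpa using heq2
        rw [this] at hmem2
        push_cast
        exact hmem2
      | pred i ihn =>
        -- from (-i:ℂ) get (-i-1) + X via lineInt 1 v X (-i), then (-i-1)
        have e1 : ((-i-1:ℤ):ℂ) + lineInt u v 0 1 ∈ RU {1,u,v} := by
          have hmem := cl 1 v m1 mv n1v n1v' hX ihn
          have heq := op1v hu hv hu1 hu1' hv1 hv1' huv huv' 0 1 (-i) 0
          push_cast at heq
          have : lineInt 1 v (lineInt u v 0 1) ((-i:ℤ):ℂ)
              = ((-i-1:ℤ):ℂ) + lineInt u v 0 1 := by push_cast; simpa using heq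
          rw [this] at hmem
          exact hmem
        have hmem2 := cl u 1 mu m1 hu1 nu1' e1 h0
        have heq2 := opu1 hu hv hu1 hu1' hv1 hv1' huv huv' (-i-1) 1 0 0
        push_cast at heq2
        have : lineInt u 1 (((-i-1:ℤ):ℂ) + lineInt u v 0 1) 0 = ((-i-1:ℤ):ℂ) := by
          simpa using heq2
        rw [this] at hmem2
        push_cast at hmem2 ⊢
        exact hmem2
    rintro z ⟨m, n, rfl⟩
    -- (n:ℂ) * X ∈ RU
    have hnX : (n:ℂ) * lineInt u v 0 1 ∈ RU {1,u,v} := by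
      have hmem := cl v u mv mu nvu nvu' (hZ n) h0
      have heq := opvu hu hv hu1 hu1' hv1 hv1' huv huv' n 0 0 0
      push_cast at heq
      have : lineInt v u ((n:ℂ)) 0 = (n:ℂ) * lineInt u v 0 1 := by simpa using heq
      rw [this] at hmem
      exact hmem
    have hmem := cl u 1 mu m1 hu1 nu1' (hZ m) hnX
    have heq := opu1 hu hv hu1 hu1' hv1 hv1' huv huv' m 0 0 n
    push_cast at heq
    have : lineInt u 1 ((m:ℂ)) ((n:ℂ) * lineInt u v 0 1)
        = (m:ℂ) + (n:ℂ) * lineInt u v 0 1 := by simpa using heq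
    rw [this] at hmem
    exact hmem

end char


/-- with `x = I_{u,v}(0,1) = a + bi` and `y = I_{u',v'}(0,1) = c + di`,
`R({1,u,v}) = R({1,u',v'})` iff (`b = d` and `a − c ∈ ℤ`) or (`b = −d` and `a + c ∈ ℤ`). -/
theorem stmt6 (u v u' v' : ℂ)
    (hu : ‖u‖ = 1) (hv : ‖v‖ = 1)
    (hu' : ‖u'‖ = 1) (hv' : ‖v'‖ = 1)
    (hu1 : u ≠ 1) (hu1' : u ≠ -1) (hv1 : v ≠ 1) (hv1' : v ≠ -1)
    (huv : u ≠ v) (huv' : u ≠ -v)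
    (hu'1 : u' ≠ 1) (hu'1' : u' ≠ -1) (hv'1 : v' ≠ 1) (hv'1' : v' ≠ -1)
    (hu'v' : u' ≠ v') (hu'v'' : u' ≠ -v')
    (a b c d : ℝ)
    (hx : lineInt u v 0 1 = (a : ℂ) + (b : ℂ) * Complex.I)
    (hy : lineInt u' v' 0 1 = (c : ℂ) + (d : ℂ) * Complex.I) :
    RU {1, u, v} = RU {1, u', v'} ↔
      ((b = d ∧ ∃ m : ℤ, a - c = (m : ℝ)) ∨ (b = -d ∧ ∃ m : ℤ, a + c = (m : ℝ))) := by

  have hX := RU_char hu hv hu1 hu1' hv1 hv1' huv huv'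
  have hY := RU_char hu' hv' hu'1 hu'1' hv'1 hv'1' hu'v' hu'v''
  have hb : b ≠ 0 := by
    intro h
    apply X_ne_real hu hv hu1 hu1' hv1 hv1' huv huv' a
    rw [hx, h]; simp
  have hd : d ≠ 0 := by
    intro h
    apply X_ne_real hu' hv' hu'1 hu'1' hv'1 hv'1' hu'v' hu'v'' c
    rw [hy, h]; simp
  constructor
  · intro hR
    rw [hX, hY] at hR
    have hy_mem : (c:ℂ) + (d:ℂ) * Complex.I ∈
        {z : ℂ | ∃ m n : ℤ, z = (m:ℂ) + (n:ℂ) * lineInt u v 0 1} := by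
      rw [hR]; exact ⟨0, 1, by rw [hy]; push_cast; ring⟩
    have hx_mem : (a:ℂ) + (b:ℂ) * Complex.I ∈
        {z : ℂ | ∃ m n : ℤ, z = (m:ℂ) + (n:ℂ) * lineInt u' v' 0 1} := by
      rw [← hR]; exact ⟨0, 1, by rw [hx]; push_cast; ring⟩
    obtain ⟨m, n, hmn⟩ := hy_mem
    obtain ⟨m', n', hmn'⟩ := hx_mem
    rw [hx] at hmn
    rw [hy] at hmn'
    have hre : c = m + n * a := by
      have h := congrArg Complex.re hmn
      simpa using h
    have him : d = n * b := by
      have h := congrArg Complex.im hmn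
      simpa using h
    have hre' : a = m' + n' * c := by
      have h := congrArg Complex.re hmn'
      simpa using h
    have him' : b = n' * d := by
      have h := congrArg Complex.im hmn'
      simpa using h
    have hnn : n' * n = 1 := by
      have h1 : b = (n':ℝ) * ((n:ℝ) * b) := him'.trans (by rw [him])
      have h2 : ((n' * n : ℤ):ℝ) = 1 := by
        have h3 : (((n' * n : ℤ):ℝ) - 1) * b = 0 := by push_cast; linarith [h1]
        rcases mul_eq_zero.mp h3 with h4 | h4
        · linarith
        · exact absurd h4 hb
      exact_mod_cast h2
    rcases Int.mul_eq_one_iff_eq_one_or_neg_one.mp hnn with ⟨h1, h2⟩ | ⟨h1, h2⟩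
    · left
      subst h2
      constructor
      · rw [him]; push_cast; ring
      · exact ⟨-m, by rw [hre]; push_cast; ring⟩
    · right
      subst h2
      constructor
      · rw [him]; push_cast; ring
      · exact ⟨m, by rw [hre]; push_cast; ring⟩
  · rintro (⟨hbd, m, hm⟩ | ⟨hbd, m, hm⟩)
    · rw [hX, hY]
      have key : lineInt u' v' 0 1 = lineInt u v 0 1 - (m:ℂ) := by
        rw [hx, hy]
        have hc : (c:ℝ) = a - m := by linarith
        rw [hc, ← hbd]; push_cast; ring
      ext z
      simp only [Set.mem_setOf_eq]
      constructor
      · rintro ⟨p, q, rfl⟩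
        exact ⟨p + q * m, q, by rw [key]; push_cast; ring⟩
      · rintro ⟨p, q, rfl⟩
        exact ⟨p - q * m, q, by rw [key]; push_cast; ring⟩
    · rw [hX, hY]
      have key : lineInt u' v' 0 1 = (m:ℂ) - lineInt u v 0 1 := by
        rw [hx, hy]
        have hc : (c:ℝ) = m - a := by linarith
        have hd2 : (d:ℝ) = -b := by linarith
        rw [hc, hd2]; push_cast; ring
      ext z
      simp only [Set.mem_setOf_eq]
      constructor
      · rintro ⟨p, q, rfl⟩
        exact ⟨p + q * m, -q, by rw [key]; push_cast; ring⟩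
      · rintro ⟨p, q, rfl⟩
        exact ⟨p + q * m, -q, by rw [key]; push_cast; ring⟩
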